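/- If I is a hereditary weak P-ideal on ω, then the space ω₁ of countable ordinals with the order topology is in FinBW(I): for every function g : ω → ω₁ there exists A ∉ I such that (g(n))_{n∈A} converges in ω₁. -/

import Mathlib

open Set

/-- The ideal `Fin ⊗ Fin` on `ω²`: sets all but finitely many of whose
vertical sections are finite. -/
def FinFin : Set (Set (ℕ × ℕ)) :=
  {A | {n : ℕ | ¬ ({m : ℕ | (n, m) ∈ A}).Finite}.Finite}

/-- The `i`-th section of a subset of `ω³`. -/
def BIsec (i : ℕ) (A : Set (ℕ × ℕ × ℕ)) : Set (ℕ × ℕ) := {p | (i, p) ∈ A}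

/-- The ideal `BI` on `ω³`. -/
def BI : Set (Set (ℕ × ℕ × ℕ)) :=
  {A | ∃ k : ℕ, (∀ i < k, BIsec i A ∈ FinFin) ∧ ∀ i ≥ k, (BIsec i A).Finite}

/-- `I` is an ideal on `X`: contains all finite sets, closed under subsets and
finite unions, and proper. -/
def IsIdeal {X : Type*} (I : Set (Set X)) : Prop :=
  (∀ A : Set X, A.Finite → A ∈ I) ∧
  (∀ A B : Set X, A ∈ I → B ⊆ A → B ∈ I) ∧
  (∀ A B : Set X, A ∈ I → B ∈ I → A ∪ B ∈ I) ∧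
  (Set.univ : Set X) ∉ I

/-- A Hausdorff space is *boring* if it is sequentially compact and some finite
set receives the limits of all injective convergent sequences. -/
def Boring (X : Type*) [TopologicalSpace X] : Prop :=
  SeqCompactSpace X ∧ ∃ F : Finset X, ∀ (x : ℕ → X) (l : X),
    Function.Injective x → Filter.Tendsto x Filter.atTop (nhds l) → l ∈ F

/-- The sequence `(x n)_{n ∈ A}` converges to `l`. -/
def ConvAlong {X : Type*} [TopologicalSpace X] (A : Set ℕ) (x : ℕ → X) (l : X) : Prop :=
  ∀ U ∈ nhds l, {n ∈ A | x n ∉ U}.Finite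

/-- `X ∈ FinBW(I)`: every sequence converges along some `I`-positive index set. -/
def FinBW (I : Set (Set ℕ)) (X : Type*) [TopologicalSpace X] : Prop :=
  ∀ x : ℕ → X, ∃ A : Set ℕ, A ∉ I ∧ ∃ l : X, ConvAlong A x l

/-- `I|B` contains an isomorphic copy of `Fin ⊗ Fin`. -/
def FinFinCopyOn (I : Set (Set ℕ)) (B : Set ℕ) : Prop :=
  ∃ g : ℕ → ℕ × ℕ, Set.BijOn g B Set.univ ∧ ∀ C ∈ FinFin, B ∩ g ⁻¹' C ∈ I

/-- The space `ω₁` of countable ordinals. -/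
def Omega1 : Type 1 := {o : Ordinal // o < (Cardinal.aleph 1).ord}

noncomputable instance : LinearOrder Omega1 := Subtype.instLinearOrder _

noncomputable instance : TopologicalSpace Omega1 := Preorder.topology Omega1

instance : OrderTopology Omega1 := ⟨rfl⟩

open scoped Classical in
/-- Key combinatorial lemma: if `I` has no copy of `Fin ⊗ Fin` on `B`, and `B ∉ I` is
covered by an increasing sequence of `I`-sets `Bk`, then there is an `I`-positive
`A ⊆ B` meeting each `Bk k` finitely. -/
lemma key_lemma (I : Set (Set ℕ)) (hI : IsIdeal I) (B : Set ℕ) (hB : B ∉ I)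
    (Bk : ℕ → Set ℕ) (hmono : Monotone Bk) (hBkI : ∀ k, Bk k ∈ I)
    (hsub : ∀ k, Bk k ⊆ B) (hcover : B ⊆ ⋃ k, Bk k)
    (hcopy : ¬ FinFinCopyOn I B) :
    ∃ A : Set ℕ, A ⊆ B ∧ A ∉ I ∧ ∀ k, (A ∩ Bk k).Finite := by
  obtain ⟨hfin, hdown, hun, hproper⟩ := hI
  by_contra hcon
  push_neg at hcon
  have hA : ∀ A : Set ℕ, A ⊆ B → (∀ k, (A ∩ Bk k).Finite) → A ∈ I := by
    intro A h1 h2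
    by_contra hAI
    exact (hcon A h1 hAI).elim (fun k hk => hk (h2 k))
  -- claim: for every M there is k with `Bk k \ Bk M` infinite
  have claim : ∀ M : ℕ, ∃ k, (Bk k \ Bk M).Infinite := by
    intro M
    by_contra hc
    push_neg at hc
    have hBM : B \ Bk M ∈ I := by
      refine hA _ diff_subset (fun k => (hc k).subset ?_)
      intro n hn
      exact ⟨hn.2, hn.1.2⟩
    have : B ∈ I := by
      refine hdown _ B (hun _ _ hBM (hBkI M)) ?_
      intro n hn
      by_cases hnM : n ∈ Bk M
      · exact Or.inr hnM
      · exact Or.inl ⟨hn, hnM⟩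
    exact hB this
  have step : ∀ M : ℕ, ∃ k, M < k ∧ (Bk k \ Bk M).Infinite := by
    intro M
    obtain ⟨k, hk⟩ := claim M
    refine ⟨max k (M + 1), lt_of_lt_of_le (Nat.lt_succ_self M) (le_max_right _ _), ?_⟩
    exact hk.mono (Set.diff_subset_diff_left (hmono (le_max_left _ _)))
  -- the increasing sequence of indices
  let m : ℕ → ℕ := fun j => Nat.rec (Classical.choose (claim 0))
    (fun _ prev => Classical.choose (step prev)) j
  have hm0 : (Bk (m 0)).Infinite := (Classical.choose_spec (claim 0)).mono diff_subset
  have hmstep : ∀ j, m j < m (j + 1) ∧ (Bk (m (j + 1)) \ Bk (m j)).Infinite := by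
    intro j
    exact Classical.choose_spec (step (m j))
  have hmmono : Monotone m := monotone_nat_of_le_succ (fun j => (hmstep j).1.le)
  have hmj : ∀ j, j ≤ m j := by
    intro j
    induction j with
    | zero => exact Nat.zero_le _
    | succ j ih => exact Nat.lt_of_le_of_lt ih (hmstep j).1
  -- the blocks
  let D : ℕ → Set ℕ := fun j => match j with
    | 0 => Bk (m 0)
    | (j + 1) => Bk (m (j + 1)) \ Bk (m j)
  have hDinf : ∀ j, (D j).Infinite := by
    intro j
    cases j with
    | zero => exact hm0
    | succ j => exact (hmstep j).2
  have hDsub : ∀ j, D j ⊆ Bk (m j) := by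
    intro j
    cases j with
    | zero => exact subset_rfl
    | succ j => exact diff_subset
  have hDI : ∀ j, D j ∈ I := fun j => hdown _ _ (hBkI (m j)) (hDsub j)
  have hDB : ∀ j, D j ⊆ B := fun j => (hDsub j).trans (hsub (m j))
  have hacc : ∀ j n, n ∈ Bk (m j) ↔ ∃ i ≤ j, n ∈ D i := by
    intro j
    induction j with
    | zero =>
      intro n
      constructor
      · intro hn; exact ⟨0, le_refl 0, hn⟩
      · rintro ⟨i, hi, hn⟩
        rw [Nat.le_zero] at hi
        subst hi
        exact hn
    | succ j ih =>
      intro n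
      constructor
      · intro hn
        by_cases hnj : n ∈ Bk (m j)
        · obtain ⟨i, hi, hni⟩ := (ih n).1 hnj
          exact ⟨i, hi.trans (Nat.le_succ j), hni⟩
        · exact ⟨j + 1, le_refl _, hn, hnj⟩
      · rintro ⟨i, hi, hn⟩
        rcases Nat.le_succ_iff.1 hi with hi' | hi'
        · exact hmono (hmmono (Nat.le_succ j)) ((ih n).2 ⟨i, hi', hn⟩)
        · subst hi'
          exact hDsub (j + 1) hn
  have hDdisj : ∀ i j, i < j → ∀ n, n ∈ D i → n ∈ D j → False := by
    intro i j hij n hni hnj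
    obtain ⟨j', rfl⟩ : ∃ j', j = j' + 1 := ⟨j - 1, by omega⟩
    have h1 : n ∈ Bk (m j') := hmono (hmmono (by omega)) (hDsub i hni)
    exact hnj.2 h1
  -- the block index function
  let J : ℕ → ℕ := fun n => sInf {j | n ∈ Bk (m j)}
  have hJmem : ∀ n ∈ B, n ∈ D (J n) := by
    intro n hn
    obtain ⟨k, hk⟩ : ∃ k, n ∈ Bk k := by
      have := hcover hn
      simpa using this
    have hne : {j | n ∈ Bk (m j)}.Nonempty := ⟨k, hmono (hmj k) hk⟩
    have h1 : n ∈ Bk (m (J n)) := Nat.sInf_mem hne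
    cases hJ : J n with
    | zero =>
      rw [hJ] at h1
      exact h1
    | succ j' =>
      rw [hJ] at h1
      have hnot : n ∉ Bk (m j') :=
        Nat.notMem_of_lt_sInf (s := {j | n ∈ Bk (m j)})
          (by show j' < J n; rw [hJ]; exact Nat.lt_succ_self j')
      exact ⟨h1, hnot⟩
  have hJuniq : ∀ n j, n ∈ D j → J n = j := by
    intro n j hn
    have hnB : n ∈ B := hDB j hn
    have h1 := hJmem n hnB
    rcases lt_trichotomy (J n) j with hlt | heq | hgt
    · exact absurd (hDdisj _ _ hlt n h1 hn) (by simp)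
    · exact heq
    · exact absurd (hDdisj _ _ hgt n hn h1) (by simp)
  -- the bijection
  let g' : ℕ → ℕ × ℕ := fun n => (J n, Nat.count (· ∈ D (J n)) n)
  have hsetOf : ∀ j, {x | x ∈ D j} = D j := fun j => rfl
  have hbij : Set.BijOn g' B Set.univ := by
    refine ⟨fun _ _ => trivial, ?_, ?_⟩
    · intro a ha b hb heq
      have hJa := hJmem a ha
      have hJb := hJmem b hb
      have h1 : J a = J b := congrArg Prod.fst heq
      have h2 : Nat.count (· ∈ D (J a)) a = Nat.count (· ∈ D (J b)) b :=
        congrArg Prod.snd heq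
      have ha' : Nat.nth (· ∈ D (J a)) (Nat.count (· ∈ D (J a)) a) = a :=
        Nat.nth_count hJa
      have hb' : Nat.nth (· ∈ D (J b)) (Nat.count (· ∈ D (J b)) b) = b :=
        Nat.nth_count hJb
      have hkey : Nat.nth (· ∈ D (J b)) (Nat.count (· ∈ D (J b)) b) =
          Nat.nth (· ∈ D (J a)) (Nat.count (· ∈ D (J a)) a) := by rw [h2, h1]
      rw [ha', hb'] at hkey
      exact hkey.symm
    · rintro ⟨j, c⟩ -
      have hinfj : {x | x ∈ D j}.Infinite := hDinf j
      set n := Nat.nth (· ∈ D j) c with hn_def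
      have hn : n ∈ D j := Nat.nth_mem_of_infinite hinfj c
      have hnB : n ∈ B := hDB j hn
      have hj : J n = j := hJuniq n j hn
      refine ⟨n, hnB, ?_⟩
      show (J n, Nat.count (· ∈ D (J n)) n) = (j, c)
      have : Nat.count (· ∈ D (J n)) n = c := by
        rw [hj]
        exact Nat.count_nth_of_infinite hinfj c
      rw [this, hj]
  -- smallness of preimages
  have hsmall : ∀ C ∈ FinFin, B ∩ g' ⁻¹' C ∈ I := by
    intro C hC
    have hT : {k : ℕ | ¬ ({q : ℕ | (k, q) ∈ C}).Finite}.Finite := hC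
    obtain ⟨K, hK⟩ := hT.bddAbove
    have hsec : ∀ j, K < j → ({q : ℕ | (j, q) ∈ C}).Finite := by
      intro j hj
      by_contra hc
      exact absurd (hK hc) (not_le.2 hj)
    set A : Set ℕ := (B ∩ g' ⁻¹' C) \ Bk (m K) with hA_def
    have hAfin : ∀ j, (A ∩ D j).Finite := by
      intro j
      rcases le_or_gt j K with hjK | hjK
      · have : A ∩ D j ⊆ ∅ := by
          rintro n ⟨hnA, hnD⟩
          exact hnA.2 (hmono (hmmono hjK) (hDsub j hnD))
        exact Set.finite_empty.subset this
      · have himg : A ∩ D j ⊆ (Nat.nth (· ∈ D j)) '' {q : ℕ | (j, q) ∈ C} := by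
          rintro n ⟨hnA, hnD⟩
          have hj : J n = j := hJuniq n j hnD
          have hgC : g' n ∈ C := hnA.1.2
          have hgC' : (j, Nat.count (· ∈ D j) n) ∈ C := by
            rw [← hj]
            exact hgC
          refine ⟨Nat.count (· ∈ D j) n, hgC', ?_⟩
          exact Nat.nth_count hnD
        exact ((hsec j hjK).image _).subset himg
    have hAk : ∀ k, (A ∩ Bk k).Finite := by
      intro k
      have hsub1 : A ∩ Bk k ⊆ ⋃ i ∈ Finset.range (k + 1), (A ∩ D i) := by
        rintro n ⟨hnA, hnk⟩
        have : n ∈ Bk (m k) := hmono (hmj k) hnk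
        obtain ⟨i, hi, hni⟩ := (hacc k n).1 this
        exact Set.mem_biUnion (Finset.mem_range.2 (Nat.lt_succ_of_le hi)) ⟨hnA, hni⟩
      exact (Set.Finite.biUnion (Finset.range (k + 1)).finite_toSet
        (fun i _ => hAfin i)).subset hsub1
    have hAI : A ∈ I := hA A (fun n hn => hn.1.1) hAk
    have hfinal : B ∩ g' ⁻¹' C ⊆ Bk (m K) ∪ A := by
      intro n hn
      by_cases hnK : n ∈ Bk (m K)
      · exact Or.inl hnK
      · exact Or.inr ⟨hn, hnK⟩
    exact hdown _ _ (hun _ _ (hBkI (m K)) hAI) hfinal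
  exact hcopy ⟨g', hbij, hsmall⟩

theorem stmt_16 (I : Set (Set ℕ)) (hI : IsIdeal I)
    (h : ∀ B : Set ℕ, B ∉ I → ¬ FinFinCopyOn I B) :
    ∀ g : ℕ → Omega1, ∃ A : Set ℕ, A ∉ I ∧ ∃ l : Omega1, ConvAlong A g l := by
  obtain ⟨hfin, hdown, hun, hproper⟩ := hI
  intro g
  -- an upper bound for the range of g
  set ub : Ordinal := ⨆ n, (g n).val with hub_def
  have hub_lt : ub < (Cardinal.aleph 1).ord := by
    refine Cardinal.iSup_lt_ord_of_isRegular Cardinal.isRegular_aleph_one ?_ (fun n => (g n).2)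
    rw [Cardinal.mk_nat]
    exact Cardinal.aleph0_lt_aleph_one
  have hle : ∀ n, (g n).val ≤ ub := fun n => Ordinal.le_iSup (fun n => (g n).val) n
  -- the minimal ordinal whose initial segment is I-positive
  set S : Set Ordinal :=
    {o | ∃ ho : o < (Cardinal.aleph 1).ord, {n | g n ≤ ⟨o, ho⟩} ∉ I} with hS_def
  have hSne : ub ∈ S := by
    refine ⟨hub_lt, ?_⟩
    have : {n | g n ≤ (⟨ub, hub_lt⟩ : Omega1)} = Set.univ := by
      refine Set.eq_univ_of_forall (fun n => ?_)
      show g n ≤ (⟨ub, hub_lt⟩ : Omega1)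
      exact Subtype.coe_le_coe.1 (hle n)
    rw [this]
    exact hproper
  have hwf : WellFounded ((· < ·) : Ordinal → Ordinal → Prop) := Ordinal.lt_wf
  set lo : Ordinal := hwf.min S ⟨ub, hSne⟩ with hlo_def
  obtain ⟨hlo, hLI⟩ : lo ∈ S := hwf.min_mem S ⟨ub, hSne⟩
  set l : Omega1 := ⟨lo, hlo⟩ with hl_def
  have hmin : ∀ x : Omega1, x < l → {n | g n ≤ x} ∈ I := by
    intro x hx
    by_contra hxI
    have hxS : x.val ∈ S := ⟨x.2, by
      exact hxI⟩
    exact hwf.not_lt_min S hxS (Subtype.coe_lt_coe.2 hx)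
  by_cases hE : {n | g n = l} ∈ I
  · -- the hard case: limits strictly below l
    set B : Set ℕ := {n | g n < l} with hB_def
    have hBI : B ∉ I := by
      intro hB
      apply hLI
      have hsub1 : {n | g n ≤ (⟨lo, hlo⟩ : Omega1)} ⊆ B ∪ {n | g n = l} := by
        intro n hn
        have hn' : g n ≤ l := hn
        rcases hn'.lt_or_eq with hlt | heq
        · exact Or.inl hlt
        · exact Or.inr heq
      exact hdown _ _ (hun _ _ hB hE) hsub1
    have hBne : B.Nonempty := by
      rcases Set.eq_empty_or_nonempty B with he | hne
      · exact absurd (hfin B (he ▸ Set.finite_empty)) hBI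
      · exact hne
    obtain ⟨n0, hn0⟩ := hBne
    -- Iio l is countable
    have hcnt : (Set.Iio l).Countable := by
      have h1 : (Set.Iio lo : Set Ordinal).Countable := by
        have hmk := Ordinal.mk_Iio_ordinal lo
        have hcard : lo.card < Cardinal.aleph 1 := Cardinal.lt_ord.1 hlo
        have hcard' : lo.card ≤ Cardinal.aleph0 := by
          rwa [← Cardinal.succ_aleph0, Order.lt_succ_iff] at hcard
        have hle2 : Cardinal.mk (Set.Iio lo) ≤ Cardinal.aleph0 := by
          rw [hmk, ← Cardinal.lift_aleph0.{1, 0}]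
          exact Cardinal.lift_le.2 hcard'
        have := Cardinal.mk_le_aleph0_iff.1 hle2
        exact Set.countable_coe_iff.1 this
      have heq : (Set.Iio l : Set Omega1) = Subtype.val ⁻¹' (Set.Iio lo) := by
        ext x
        exact Iff.rfl
      rw [heq]
      exact h1.preimage Subtype.val_injective
    obtain ⟨β, hβ⟩ := hcnt.exists_eq_range ⟨g n0, hn0⟩
    have hβlt : ∀ j, β j < l := by
      intro j
      have : β j ∈ Set.Iio l := by rw [hβ]; exact Set.mem_range_self j
      exact this
    have hβsurj : ∀ x : Omega1, x < l → ∃ j, β j = x := by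
      intro x hx
      have : x ∈ Set.range β := by rw [← hβ]; exact hx
      exact this
    -- the increasing sequence of I-sets
    set Bk : ℕ → Set ℕ := fun k => {n | ∃ j ≤ k, g n ≤ β j} with hBk_def
    have hmonoBk : Monotone Bk := by
      intro a b hab n hn
      obtain ⟨j, hj, hgn⟩ := hn
      exact ⟨j, hj.trans hab, hgn⟩
    have hBkI : ∀ k, Bk k ∈ I := by
      intro k
      induction k with
      | zero =>
        have : Bk 0 = {n | g n ≤ β 0} := by
          ext n
          constructor
          · rintro ⟨j, hj, hgn⟩
            rw [Nat.le_zero] at hj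
            subst hj
            exact hgn
          · intro hn; exact ⟨0, le_refl 0, hn⟩
        rw [this]
        exact hmin (β 0) (hβlt 0)
      | succ k ih =>
        have : Bk (k + 1) = Bk k ∪ {n | g n ≤ β (k + 1)} := by
          ext n
          constructor
          · rintro ⟨j, hj, hgn⟩
            rcases Nat.le_succ_iff.1 hj with hj' | hj'
            · exact Or.inl ⟨j, hj', hgn⟩
            · subst hj'; exact Or.inr hgn
          · rintro (⟨j, hj, hgn⟩ | hgn)
            · exact ⟨j, hj.trans (Nat.le_succ k), hgn⟩
            · exact ⟨k + 1, le_refl _, hgn⟩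
        rw [this]
        exact hun _ _ ih (hmin (β (k + 1)) (hβlt (k + 1)))
    have hsubBk : ∀ k, Bk k ⊆ B := by
      rintro k n ⟨j, _, hgn⟩
      exact lt_of_le_of_lt hgn (hβlt j)
    have hcoverBk : B ⊆ ⋃ k, Bk k := by
      intro n hn
      obtain ⟨j, hj⟩ := hβsurj (g n) hn
      exact Set.mem_iUnion.2 ⟨j, j, le_refl j, hj.ge⟩
    obtain ⟨A, hAB, hAI, hAfin⟩ := key_lemma I ⟨hfin, hdown, hun, hproper⟩ B hBI Bk
      hmonoBk hBkI hsubBk hcoverBk (h B hBI)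
    refine ⟨A, hAI, l, ?_⟩
    intro U hU
    obtain ⟨α, hαl, hIoc⟩ := exists_Ioc_subset_of_mem_nhds hU ⟨g n0, hn0⟩
    obtain ⟨j, hj⟩ := hβsurj α hαl
    have hsub2 : {n ∈ A | g n ∉ U} ⊆ A ∩ Bk j := by
      rintro n ⟨hnA, hnU⟩
      refine ⟨hnA, j, le_refl j, ?_⟩
      have hgl : g n < l := hAB hnA
      by_contra hgt
      rw [hj] at hgt
      exact hnU (hIoc ⟨not_le.1 hgt, hgl.le⟩)
    exact (hAfin j).subset hsub2
  · -- the easy case: the value l is attained I-positively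
    refine ⟨{n | g n = l}, hE, l, ?_⟩
    intro U hU
    have : {n ∈ {n | g n = l} | g n ∉ U} ⊆ ∅ := by
      rintro n ⟨hn, hnU⟩
      exact hnU (hn ▸ mem_of_mem_nhds hU)
    exact Set.finite_empty.subset this
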